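/- Fix a configuration x = (x₁,…,x_n) ∈ (ℝ⁴)ⁿ and chronological products T(S) ∈ A for all proper subsets S ⊊ {1,…,n}, with T(∅) = 1, satisfying the causality axiom with respect to x. Suppose A_n, R_n ∈ A satisfy A_n − R_n = A′_n − R′_n, together with the support conditions: A_n = 0 if (x₁,…,x_n) ∉ Γ̄⁺(x_n), and R_n = 0 if (x₁,…,x_n) ∉ Γ̄⁻(x_n). Define T_n := A_n − A′_n (= R_n − R′_n). Then for every partition X₁ ⊔ X₂ = {1,…,n} with X₁ ≠ ∅, X₂ ≠ ∅ and x(X₁) ≥ x(X₂), one has T_n = T(X₁)·T(X₂). -/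

import Mathlib

/-- The Minkowski quadratic form on `ℝ⁴`. -/
def minkQ (x : Fin 4 → ℝ) : ℝ := x 0 ^ 2 - x 1 ^ 2 - x 2 ^ 2 - x 3 ^ 2

/-- The open forward light cone `V⁺`. -/
def Vplus : Set (Fin 4 → ℝ) := {x | 0 < minkQ x ∧ 0 < x 0}

/-- The open backward light cone `V⁻`. -/
def Vminus : Set (Fin 4 → ℝ) := {x | 0 < minkQ x ∧ x 0 < 0}

/-- Sum over all ordered partitions of `X` into `r ≥ 1` nonempty pairwise disjoint blocks
`X₁, …, X_r` of `(-1)^r * T X₁ * ⋯ * T X_r` (with value `1` for `X = ∅`), computed by peeling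
off the first block. -/
def opSum {A : Type*} [Ring A] {ι : Type*} [DecidableEq ι]
    (T : Finset ι → A) (X : Finset ι) : A :=
  if _hX : X = ∅ then 1
  else
    ∑ Y ∈ (X.powerset.filter (fun Y => Y ≠ ∅)).attach,
      (-1 : A) * T Y.1 * opSum T (X \ Y.1)
termination_by X.card
decreasing_by
  have hY := Y.2
  simp only [Finset.mem_filter, Finset.mem_powerset] at hY
  have h1 : Y.1.card ≤ X.card := Finset.card_le_card hY.1
  have h2 : 0 < Y.1.card := Finset.card_pos.mpr (Finset.nonempty_iff_ne_empty.mpr hY.2)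
  rw [Finset.card_sdiff, Finset.inter_eq_left.mpr hY.1]
  omega

/-- The antichronological products `T̄`, defined by `T̄(∅) = 1` and
`(−1)^{|X|} T̄(X) = Σ_{r=1}^{|X|} (−1)^r Σ T(X₁)⋯T(X_r)`, the inner sum running over all ordered
partitions of `X` into `r` nonempty pairwise disjoint subsets. -/
def chronoBar {A : Type*} [Ring A] {ι : Type*} [DecidableEq ι]
    (T : Finset ι → A) (X : Finset ι) : A :=
  (-1 : A) ^ X.card * opSum T X

/-- The advanced sum `A′_n := Σ (−1)^{|Y|} T(X)·T̄(Y)`, over all partitions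
`X ⊔ Y = {1,…,n}` with `n ∈ X` (here `lst` plays the role of the index `n`) and `Y ≠ ∅`. -/
def advP {A : Type*} [Ring A] {ι : Type*} [Fintype ι] [DecidableEq ι]
    (T : Finset ι → A) (lst : ι) : A :=
  ∑ Y ∈ (Finset.univ.erase lst).powerset.filter (fun Y => Y ≠ ∅),
    (-1 : A) ^ Y.card * (T Yᶜ * chronoBar T Y)

/-- The retarded sum `R′_n := Σ (−1)^{|Y|} T̄(Y)·T(X)`, over all partitions
`X ⊔ Y = {1,…,n}` with `n ∈ X` (here `lst` plays the role of the index `n`) and `Y ≠ ∅`. -/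
def retP {A : Type*} [Ring A] {ι : Type*} [Fintype ι] [DecidableEq ι]
    (T : Finset ι → A) (lst : ι) : A :=
  ∑ Y ∈ (Finset.univ.erase lst).powerset.filter (fun Y => Y ≠ ∅),
    (-1 : A) ^ Y.card * (chronoBar T Y * T Yᶜ)


namespace EG


lemma minkQ_continuous : Continuous minkQ := by
  unfold minkQ
  fun_prop

lemma minkQ_neg (y : Fin 4 → ℝ) : minkQ (-y) = minkQ y := by
  simp [minkQ]

lemma Vminus_eq_neg : Vminus = -Vplus := by
  ext y
  simp only [Set.mem_neg, Vplus, Vminus, Set.mem_setOf_eq, minkQ_neg, Pi.neg_apply]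
  constructor
  · rintro ⟨h1, h2⟩; exact ⟨h1, by linarith⟩
  · rintro ⟨h1, h2⟩; exact ⟨h1, by linarith⟩

lemma neg_mem_closure_Vminus {v : Fin 4 → ℝ} (h : v ∈ closure Vplus) :
    -v ∈ closure Vminus := by
  refine map_mem_closure continuous_neg h ?_
  intro y hy
  rw [Vminus_eq_neg, Set.mem_neg, neg_neg]
  exact hy

lemma closure_Vplus_sub {v : Fin 4 → ℝ} (h : v ∈ closure Vplus) :
    0 ≤ minkQ v ∧ 0 ≤ v 0 := by
  have hcl : IsClosed {x : Fin 4 → ℝ | 0 ≤ minkQ x ∧ 0 ≤ x 0} := by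
    apply IsClosed.inter
    · exact isClosed_le continuous_const minkQ_continuous
    · exact isClosed_le continuous_const (continuous_apply 0)
  have hsub : Vplus ⊆ {x : Fin 4 → ℝ | 0 ≤ minkQ x ∧ 0 ≤ x 0} := by
    rintro y ⟨h1, h2⟩; exact ⟨le_of_lt h1, le_of_lt h2⟩
  exact closure_minimal hsub hcl h

lemma closure_Vminus_sub {v : Fin 4 → ℝ} (h : v ∈ closure Vminus) :
    0 ≤ minkQ v ∧ v 0 ≤ 0 := by
  have hcl : IsClosed {x : Fin 4 → ℝ | 0 ≤ minkQ x ∧ x 0 ≤ 0} := by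
    apply IsClosed.inter
    · exact isClosed_le continuous_const minkQ_continuous
    · exact isClosed_le (continuous_apply 0) continuous_const
  have hsub : Vminus ⊆ {x : Fin 4 → ℝ | 0 ≤ minkQ x ∧ x 0 ≤ 0} := by
    rintro y ⟨h1, h2⟩; exact ⟨le_of_lt h1, le_of_lt h2⟩
  exact closure_minimal hsub hcl h

lemma eq_zero_of_mem_both {v : Fin 4 → ℝ} (hp : v ∈ closure Vplus)
    (hm : v ∈ closure Vminus) : v = 0 := by
  obtain ⟨hq1, h01⟩ := closure_Vplus_sub hp
  obtain ⟨hq2, h02⟩ := closure_Vminus_sub hm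
  have h0 : v 0 = 0 := le_antisymm h02 h01
  have h1 : v 1 = 0 := by unfold minkQ at hq1; nlinarith [sq_nonneg (v 1), sq_nonneg (v 2), sq_nonneg (v 3)]
  have h2 : v 2 = 0 := by unfold minkQ at hq1; nlinarith [sq_nonneg (v 1), sq_nonneg (v 2), sq_nonneg (v 3)]
  have h3 : v 3 = 0 := by unfold minkQ at hq1; nlinarith [sq_nonneg (v 1), sq_nonneg (v 2), sq_nonneg (v 3)]
  funext i
  fin_cases i <;> simpa

lemma zero_mem_closure_Vminus : (0 : Fin 4 → ℝ) ∈ closure Vminus := by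
  have hseq : Filter.Tendsto (fun k : ℕ => (fun i : Fin 4 => if i = 0 then -(1/(k+1) : ℝ) else 0))
      Filter.atTop (nhds 0) := by
    rw [tendsto_pi_nhds]
    intro i
    by_cases hi : i = 0
    · subst hi
      simp only [if_pos rfl]
      have := (tendsto_one_div_add_atTop_nhds_zero_nat : Filter.Tendsto (fun n : ℕ => 1 / ((n : ℝ) + 1)) Filter.atTop (nhds 0))
      have h2 := this.neg
      simpa using h2
    · simp only [if_neg hi]
      simpa using tendsto_const_nhds
  apply mem_closure_of_tendsto hseq
  filter_upwards with k
  constructor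
  · show 0 < minkQ _
    have hpos : (0:ℝ) < 1/(k+1) := by positivity
    have he : minkQ (fun i : Fin 4 => if i = 0 then -(1/(k+1) : ℝ) else 0)
        = (1/(k+1):ℝ)^2 := by
      simp [minkQ, Fin.ext_iff]
    rw [he]
    positivity
  · show (if (0 : Fin 4) = 0 then -(1/(k+1):ℝ) else 0) < 0
    rw [if_pos rfl]
    have hpos : (0:ℝ) < 1/(k+1) := by positivity
    linarith



variable {A : Type*} [Ring A] {ι : Type*} [DecidableEq ι]

/-- delta function -/
def dd (X : Finset ι) : A := if X = ∅ then 1 else 0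

def eT (T : Finset ι → A) (X : Finset ι) : A := (-1:A)^X.card * T X

def conv (f g : Finset ι → A) : Finset ι → A := fun X => ∑ Y ∈ X.powerset, f Y * g (X \ Y)

lemma opSum_empty (T : Finset ι → A) : opSum T ∅ = 1 := by rw [opSum]; simp

lemma chronoBar_empty (T : Finset ι → A) : chronoBar T ∅ = 1 := by
  simp [chronoBar, opSum_empty]

lemma opSum_ne (T : Finset ι → A) {X : Finset ι} (hX : X ≠ ∅) :
    opSum T X = ∑ Y ∈ X.powerset.filter (fun Y => Y ≠ ∅), (-1:A) * T Y * opSum T (X \ Y) := by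
  rw [opSum, dif_neg hX]
  exact Finset.sum_attach (X.powerset.filter (fun Y => Y ≠ ∅)) (fun Y => (-1:A) * T Y * opSum T (X \ Y))

lemma sum_powerset_split {M : Type*} [AddCommMonoid M] (X : Finset ι) (F : Finset ι → M) :
    ∑ Y ∈ X.powerset, F Y = F ∅ + ∑ Y ∈ X.powerset.filter (fun Y => Y ≠ ∅), F Y := by
  rw [Finset.filter_ne']
  exact (Finset.add_sum_erase _ F (Finset.empty_mem_powerset X)).symm

lemma neg_one_pow_comm (k : ℕ) (a : A) : (-1:A)^k * a = a * (-1:A)^k :=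
  ((Commute.neg_one_left a).pow_left k).eq

lemma neg_one_pow_sdiff {X Y : Finset ι} (h : Y ⊆ X) :
    (-1:A)^((X \ Y).card) * (-1:A)^Y.card = (-1:A)^X.card := by
  rw [← pow_add]
  have : (X \ Y).card + Y.card = X.card := Finset.card_sdiff_add_card_eq_card h
  rw [this]

lemma sign_mul_left (p : ℕ) (a b : A) : a * ((-1:A)^p * b) = (-1:A)^p * (a*b) := by
  rw [← mul_assoc, ← neg_one_pow_comm p a, mul_assoc]

lemma sign_mul_mul (p q : ℕ) (a b : A) :
    ((-1:A)^p * a) * ((-1:A)^q * b) = (-1:A)^(p+q) * (a * b) := by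
  rw [mul_assoc, sign_mul_left, ← mul_assoc, ← pow_add]

lemma conv_eT_bar (T : Finset ι → A) (hT1 : T ∅ = 1) (X : Finset ι) :
    conv (eT T) (chronoBar T) X = dd X := by
  by_cases hX : X = ∅
  · subst hX
    simp [conv, dd, eT, chronoBar_empty, hT1]
  · have key : ∀ Y ∈ X.powerset.filter (fun Y => Y ≠ ∅),
        eT T Y * chronoBar T (X \ Y)
          = -((-1:A)^X.card * ((-1) * T Y * opSum T (X \ Y))) := by
      intro Y hY
      simp only [Finset.mem_filter, Finset.mem_powerset] at hY
      rw [eT, chronoBar, sign_mul_mul]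
      have hc : Y.card + (X \ Y).card = X.card := by
        rw [add_comm]; exact Finset.card_sdiff_add_card_eq_card hY.1
      rw [hc, neg_one_mul, neg_mul, mul_neg, neg_neg]
    rw [conv]
    rw [sum_powerset_split X (fun Y => eT T Y * chronoBar T (X \ Y))]
    rw [Finset.sum_congr rfl key]
    rw [Finset.sum_neg_distrib, ← Finset.mul_sum, ← opSum_ne T hX]
    simp [eT, hT1, chronoBar, dd, hX]

lemma sum_powerset_reflect {M : Type*} [AddCommMonoid M] (X : Finset ι) (F : Finset ι → M) :
    ∑ Y ∈ X.powerset, F Y = ∑ Y ∈ X.powerset, F (X \ Y) := by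
  apply Finset.sum_nbij' (fun Y => X \ Y) (fun Y => X \ Y) <;>
    intros a ha <;> simp only [Finset.mem_powerset] at * <;>
    simp [Finset.sdiff_sdiff_self_left, Finset.inter_eq_right.mpr ha]

def opSumR (T : Finset ι → A) (X : Finset ι) : A :=
  if _hX : X = ∅ then 1
  else
    ∑ Y ∈ (X.powerset.filter (fun Y => Y ≠ ∅)).attach,
      (-1 : A) * opSumR T (X \ Y.1) * T Y.1
termination_by X.card
decreasing_by
  have hY := Y.2
  simp only [Finset.mem_filter, Finset.mem_powerset] at hY
  have h1 : Y.1.card ≤ X.card := Finset.card_le_card hY.1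
  have h2 : 0 < Y.1.card := Finset.card_pos.mpr (Finset.nonempty_iff_ne_empty.mpr hY.2)
  rw [Finset.card_sdiff, Finset.inter_eq_left.mpr hY.1]
  omega

def barR (T : Finset ι → A) (X : Finset ι) : A := (-1 : A) ^ X.card * opSumR T X

lemma opSumR_empty (T : Finset ι → A) : opSumR T ∅ = 1 := by rw [opSumR]; simp

lemma barR_empty (T : Finset ι → A) : barR T ∅ = 1 := by simp [barR, opSumR_empty]

lemma opSumR_ne (T : Finset ι → A) {X : Finset ι} (hX : X ≠ ∅) :
    opSumR T X = ∑ Y ∈ X.powerset.filter (fun Y => Y ≠ ∅), (-1:A) * opSumR T (X \ Y) * T Y := by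
  rw [opSumR, dif_neg hX]
  exact Finset.sum_attach (X.powerset.filter (fun Y => Y ≠ ∅))
    (fun Y => (-1:A) * opSumR T (X \ Y) * T Y)

lemma conv_barR_eT (T : Finset ι → A) (hT1 : T ∅ = 1) (X : Finset ι) :
    conv (barR T) (eT T) X = dd X := by
  by_cases hX : X = ∅
  · subst hX
    simp [conv, dd, eT, barR_empty, hT1]
  · have step1 : conv (barR T) (eT T) X
        = ∑ Y ∈ X.powerset, barR T (X \ Y) * eT T Y := by
      rw [conv, sum_powerset_reflect X (fun Y => barR T Y * eT T (X \ Y))]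
      refine Finset.sum_congr rfl fun Y hY => ?_
      rw [Finset.mem_powerset] at hY
      rw [Finset.sdiff_sdiff_self_left, Finset.inter_eq_right.mpr hY]
    rw [step1, sum_powerset_split X (fun Y => barR T (X \ Y) * eT T Y)]
    have key : ∀ Y ∈ X.powerset.filter (fun Y => Y ≠ ∅),
        barR T (X \ Y) * eT T Y
          = -((-1:A)^X.card * ((-1) * opSumR T (X \ Y) * T Y)) := by
      intro Y hY
      simp only [Finset.mem_filter, Finset.mem_powerset] at hY
      rw [barR, eT, sign_mul_mul, Finset.card_sdiff_add_card_eq_card hY.1,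
        neg_one_mul, neg_mul, mul_neg, neg_neg]
    rw [Finset.sum_congr rfl key, Finset.sum_neg_distrib, ← Finset.mul_sum, ← opSumR_ne T hX]
    simp [eT, hT1, barR, dd, hX]

lemma conv_dd_left (f : Finset ι → A) : conv dd f = f := by
  funext X
  rw [conv]
  rw [Finset.sum_eq_single_of_mem ∅ (Finset.empty_mem_powerset X)]
  · simp [dd]
  · intro Y _ hY
    simp [dd, hY]

lemma conv_dd_right (f : Finset ι → A) : conv f dd = f := by
  funext X
  rw [conv]
  rw [Finset.sum_eq_single_of_mem X (Finset.mem_powerset_self X)]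
  · simp [dd]
  · intro Y hY hYX
    have : X \ Y ≠ ∅ := by
      rw [Finset.mem_powerset] at hY
      intro h
      exact hYX (Finset.Subset.antisymm hY (Finset.sdiff_eq_empty_iff_subset.mp h))
    simp [dd, this]

lemma conv_assoc (f g h : Finset ι → A) : conv (conv f g) h = conv f (conv g h) := by
  funext X
  rw [conv, conv]
  simp only [conv, Finset.sum_mul, Finset.mul_sum]
  rw [Finset.sum_sigma', Finset.sum_sigma']
  refine Finset.sum_nbij' (fun p => ⟨p.2, p.1 \ p.2⟩) (fun p => ⟨p.1 ∪ p.2, p.1⟩)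
    ?_ ?_ ?_ ?_ ?_
  · rintro ⟨Y, Z⟩ hp
    simp only [Finset.mem_sigma, Finset.mem_powerset] at *
    exact ⟨hp.2.trans hp.1, Finset.sdiff_subset_sdiff hp.1 (Finset.Subset.refl _)⟩
  · rintro ⟨Z, W⟩ hp
    simp only [Finset.mem_sigma, Finset.mem_powerset] at *
    constructor
    · exact Finset.union_subset hp.1 (hp.2.trans (Finset.sdiff_subset))
    · exact Finset.subset_union_left
  · rintro ⟨Y, Z⟩ hp
    simp only [Finset.mem_sigma, Finset.mem_powerset] at hp
    have : Z ∪ (Y \ Z) = Y := Finset.union_sdiff_of_subset hp.2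
    simp [this]
  · rintro ⟨Z, W⟩ hp
    simp only [Finset.mem_sigma, Finset.mem_powerset] at hp
    have hdisj : Disjoint Z W := Finset.disjoint_of_subset_right hp.2 Finset.disjoint_sdiff
    have : (Z ∪ W) \ Z = W := Finset.union_sdiff_cancel_left hdisj
    simp [this]
  · rintro ⟨Y, Z⟩ hp
    simp only [Finset.mem_sigma, Finset.mem_powerset] at hp
    have hXY : (X \ Z) \ (Y \ Z) = X \ Y := by
      ext a
      simp only [Finset.mem_sdiff]
      have h1 : a ∈ Z → a ∈ Y := fun h => hp.2 h
      have h2 : a ∈ Y → a ∈ X := fun h => hp.1 h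
      tauto
    rw [hXY, mul_assoc]

lemma barR_eq_chronoBar (T : Finset ι → A) (hT1 : T ∅ = 1) : barR T = chronoBar T := by
  have hL : conv (eT T) (chronoBar T) = dd := funext (conv_eT_bar T hT1)
  have hR : conv (barR T) (eT T) = dd := funext (conv_barR_eT T hT1)
  calc barR T = conv (barR T) dd := (conv_dd_right _).symm
    _ = conv (barR T) (conv (eT T) (chronoBar T)) := by rw [hL]
    _ = conv (conv (barR T) (eT T)) (chronoBar T) := (conv_assoc _ _ _).symm
    _ = conv dd (chronoBar T) := by rw [hR]
    _ = chronoBar T := conv_dd_left _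

lemma conv_bar_eT (T : Finset ι → A) (hT1 : T ∅ = 1) (X : Finset ι) :
    conv (chronoBar T) (eT T) X = dd X := by
  rw [← barR_eq_chronoBar T hT1]
  exact conv_barR_eT T hT1 X

lemma neg_one_pow_sdiff' {X Y : Finset ι} (h : Y ⊆ X) :
    (-1:A)^((X \ Y).card) = (-1:A)^X.card * (-1:A)^Y.card := by
  calc (-1:A)^((X \ Y).card)
      = (-1:A)^((X \ Y).card) * ((-1:A)^Y.card * (-1:A)^Y.card) := by
        rw [← pow_add, ← two_mul, pow_mul]; simp
    _ = ((-1:A)^((X \ Y).card) * (-1:A)^Y.card) * (-1:A)^Y.card := by rw [mul_assoc]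
    _ = (-1:A)^X.card * (-1:A)^Y.card := by rw [neg_one_pow_sdiff h]

lemma inner_left (T : Finset ι → A) (hT1 : T ∅ = 1) {X : Finset ι} (hX : X ≠ ∅) :
    ∑ Y ∈ X.powerset, (-1:A)^Y.card * (T (X \ Y) * chronoBar T Y) = 0 := by
  rw [sum_powerset_reflect X (fun Y => (-1:A)^Y.card * (T (X \ Y) * chronoBar T Y))]
  have key : ∀ Y ∈ X.powerset,
      (-1:A)^((X \ Y).card) * (T (X \ (X \ Y)) * chronoBar T (X \ Y))
        = (-1:A)^X.card * (eT T Y * chronoBar T (X \ Y)) := by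
    intro Y hY
    rw [Finset.mem_powerset] at hY
    rw [Finset.sdiff_sdiff_self_left, Finset.inter_eq_right.mpr hY,
      neg_one_pow_sdiff' hY, eT, mul_assoc, mul_assoc]
  rw [Finset.sum_congr rfl key, ← Finset.mul_sum]
  have := conv_eT_bar T hT1 X
  rw [conv] at this
  rw [this]
  simp [dd, hX]

lemma inner_right (T : Finset ι → A) (hT1 : T ∅ = 1) {X : Finset ι} (hX : X ≠ ∅) :
    ∑ Y ∈ X.powerset, (-1:A)^Y.card * (chronoBar T Y * T (X \ Y)) = 0 := by
  have hconv : conv (chronoBar T) (eT T) X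
      = (-1:A)^X.card * ∑ Y ∈ X.powerset, (-1:A)^Y.card * (chronoBar T Y * T (X \ Y)) := by
    rw [conv, Finset.mul_sum]
    refine Finset.sum_congr rfl fun Y hY => ?_
    rw [Finset.mem_powerset] at hY
    rw [eT, sign_mul_left, neg_one_pow_sdiff' hY, mul_assoc]
  have hc := conv_bar_eT T hT1 X
  rw [hconv, dd, if_neg hX] at hc
  have h2 : (-1:A)^X.card * ((-1:A)^X.card *
      ∑ Y ∈ X.powerset, (-1:A)^Y.card * (chronoBar T Y * T (X \ Y)))
      = ∑ Y ∈ X.powerset, (-1:A)^Y.card * (chronoBar T Y * T (X \ Y)) := by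
    rw [← mul_assoc, ← pow_add, ← two_mul, pow_mul]; simp
  rw [← h2, hc, mul_zero]

lemma bar_rec (T : Finset ι → A) (hT1 : T ∅ = 1) {X : Finset ι} (hX : X ≠ ∅) :
    chronoBar T X
      = -∑ Y ∈ X.powerset.filter (fun Y => Y ≠ ∅),
          (-1:A)^Y.card * (T Y * chronoBar T (X \ Y)) := by
  have h := conv_eT_bar T hT1 X
  rw [conv, sum_powerset_split X (fun Y => eT T Y * chronoBar T (X \ Y)), dd, if_neg hX] at h
  have h0 : eT T ∅ * chronoBar T (X \ ∅) = chronoBar T X := by simp [eT, hT1]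
  rw [h0] at h
  have hcg : ∀ Y ∈ X.powerset.filter (fun Y => Y ≠ ∅),
      eT T Y * chronoBar T (X \ Y) = (-1:A)^Y.card * (T Y * chronoBar T (X \ Y)) := by
    intro Y _
    rw [eT, mul_assoc]
  rw [Finset.sum_congr rfl hcg] at h
  exact eq_neg_of_add_eq_zero_left h

lemma inner_conv (T : Finset ι → A) (hT1 : T ∅ = 1) {X : Finset ι} (hX : X ≠ ∅) :
    ∑ Y ∈ X.powerset, (-1:A)^Y.card * (T Y * chronoBar T (X \ Y)) = 0 := by
  have h := conv_eT_bar T hT1 X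
  rw [conv, dd, if_neg hX] at h
  rw [← h]
  exact Finset.sum_congr rfl fun Y _ => by rw [eT, mul_assoc]

lemma rearrange (a b : ℕ) (t₁ t₂ u₂ u₁ : A) :
    (-1:A)^(a+b) * ((t₁ * t₂) * (u₂ * u₁))
      = (-1:A)^a * (t₁ * ((-1:A)^b * (t₂ * u₂) * u₁)) := by
  have h1 : (-1:A)^b * (t₂ * u₂) * u₁ = (-1:A)^b * (t₂ * (u₂ * u₁)) := by
    rw [mul_assoc, mul_assoc]
  rw [h1, sign_mul_left b t₁, pow_add, mul_assoc]
  congr 1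
  congr 1
  rw [mul_assoc]

lemma sum_powerset_union_ne {M : Type*} [AddCommMonoid M] (X₁ X₂ : Finset ι)
    (hd : Disjoint X₁ X₂) (F : Finset ι → M) (G : Finset ι × Finset ι → M)
    (hFG : ∀ Y₁ Y₂ : Finset ι, Y₁ ⊆ X₁ → Y₂ ⊆ X₂ → Y₁ ∪ Y₂ ≠ ∅ → F (Y₁ ∪ Y₂) = G (Y₁, Y₂)) :
    ∑ Y ∈ (X₁ ∪ X₂).powerset.filter (fun Y => Y ≠ ∅), F Y
      = ∑ p ∈ (X₁.powerset ×ˢ X₂.powerset).erase (∅, ∅), G p := by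
  have hdl := Finset.disjoint_left.mp hd
  refine Finset.sum_nbij' (fun Y => (Y ∩ X₁, Y ∩ X₂)) (fun p => p.1 ∪ p.2) ?_ ?_ ?_ ?_ ?_
  · intro Y hY
    simp only [Finset.mem_filter, Finset.mem_powerset] at hY
    have hrec : (Y ∩ X₁) ∪ (Y ∩ X₂) = Y := by
      rw [← Finset.inter_union_distrib_left, Finset.inter_eq_left.mpr hY.1]
    simp only [Finset.mem_erase, Finset.mem_product, Finset.mem_powerset]
    refine ⟨?_, Finset.inter_subset_right, Finset.inter_subset_right⟩
    intro hcon
    apply hY.2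
    have c1 : Y ∩ X₁ = ∅ := congrArg Prod.fst hcon
    have c2 : Y ∩ X₂ = ∅ := congrArg Prod.snd hcon
    rw [← hrec, c1, c2, Finset.union_empty]
  · rintro ⟨p₁, p₂⟩ hp
    simp only [Finset.mem_erase, Finset.mem_product, Finset.mem_powerset, Prod.mk.injEq] at hp
    simp only [Finset.mem_filter, Finset.mem_powerset]
    constructor
    · exact Finset.union_subset_union hp.2.1 hp.2.2
    · intro hcon
      rw [Finset.union_eq_empty] at hcon
      exact hp.1 (by rw [hcon.1, hcon.2])
  · intro Y hY
    simp only [Finset.mem_filter, Finset.mem_powerset] at hY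
    show (Y ∩ X₁) ∪ (Y ∩ X₂) = Y
    rw [← Finset.inter_union_distrib_left, Finset.inter_eq_left.mpr hY.1]
  · rintro ⟨p₁, p₂⟩ hp
    simp only [Finset.mem_erase, Finset.mem_product, Finset.mem_powerset, Prod.mk.injEq] at hp
    have e1 : (p₁ ∪ p₂) ∩ X₁ = p₁ := by
      ext a
      simp only [Finset.mem_inter, Finset.mem_union]
      have h1 : a ∈ p₁ → a ∈ X₁ := fun h => hp.2.1 h
      have h2 : a ∈ p₂ → a ∈ X₂ := fun h => hp.2.2 h
      have h3 : a ∈ X₁ → a ∉ X₂ := fun h => hdl h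
      tauto
    have e2 : (p₁ ∪ p₂) ∩ X₂ = p₂ := by
      ext a
      simp only [Finset.mem_inter, Finset.mem_union]
      have h1 : a ∈ p₁ → a ∈ X₁ := fun h => hp.2.1 h
      have h2 : a ∈ p₂ → a ∈ X₂ := fun h => hp.2.2 h
      have h3 : a ∈ X₁ → a ∉ X₂ := fun h => hdl h
      tauto
    show ((p₁ ∪ p₂) ∩ X₁, (p₁ ∪ p₂) ∩ X₂) = (p₁, p₂)
    rw [e1, e2]
  · intro Y hY
    simp only [Finset.mem_filter, Finset.mem_powerset] at hY
    have hrec : (Y ∩ X₁) ∪ (Y ∩ X₂) = Y := by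
      rw [← Finset.inter_union_distrib_left, Finset.inter_eq_left.mpr hY.1]
    rw [← hFG _ _ Finset.inter_subset_right Finset.inter_subset_right
      (by rw [hrec]; exact hY.2), hrec]

lemma chronoBar_causal (T : Finset ι → A) (hT1 : T ∅ = 1) :
    ∀ (N : ℕ) (X₁ X₂ : Finset ι), (X₁ ∪ X₂).card ≤ N → Disjoint X₁ X₂ →
    (∀ S₁ S₂ : Finset ι, S₁ ⊆ X₁ → S₂ ⊆ X₂ → T (S₁ ∪ S₂) = T S₁ * T S₂) →
    chronoBar T (X₁ ∪ X₂) = chronoBar T X₂ * chronoBar T X₁ := by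
  intro N
  induction N with
  | zero =>
    intro X₁ X₂ hcard hd hc
    have hun : X₁ ∪ X₂ = ∅ := Finset.card_eq_zero.mp (Nat.le_zero.mp hcard)
    rw [Finset.union_eq_empty] at hun
    rw [hun.1, hun.2]
    simp [chronoBar_empty]
  | succ N IH =>
    intro X₁ X₂ hcard hd hc
    by_cases h2 : X₂ = ∅
    · subst h2
      simp [chronoBar_empty]
    · have hX : X₁ ∪ X₂ ≠ ∅ := by
        intro h; rw [Finset.union_eq_empty] at h; exact h2 h.2
      rw [bar_rec T hT1 hX]
      set G : Finset ι × Finset ι → A := fun p =>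
        (-1:A)^p.1.card * (T p.1 *
          ((-1:A)^p.2.card * (T p.2 * chronoBar T (X₂ \ p.2)) * chronoBar T (X₁ \ p.1)))
        with hG
      have hFG : ∀ Y₁ Y₂ : Finset ι, Y₁ ⊆ X₁ → Y₂ ⊆ X₂ → Y₁ ∪ Y₂ ≠ ∅ →
          (-1:A)^(Y₁ ∪ Y₂).card * (T (Y₁ ∪ Y₂) * chronoBar T ((X₁ ∪ X₂) \ (Y₁ ∪ Y₂)))
            = G (Y₁, Y₂) := by
        intro Y₁ Y₂ h₁ h₂ hne
        have hdy : Disjoint Y₁ Y₂ := hd.mono h₁ h₂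
        have hcardu : (Y₁ ∪ Y₂).card = Y₁.card + Y₂.card := Finset.card_union_of_disjoint hdy
        have hsdiff : (X₁ ∪ X₂) \ (Y₁ ∪ Y₂) = (X₁ \ Y₁) ∪ (X₂ \ Y₂) := by
          ext a
          simp only [Finset.mem_sdiff, Finset.mem_union]
          have m1 : a ∈ Y₁ → a ∈ X₁ := fun h => h₁ h
          have m2 : a ∈ Y₂ → a ∈ X₂ := fun h => h₂ h
          have m3 : a ∈ X₁ → a ∉ X₂ := fun h => Finset.disjoint_left.mp hd h
          tauto
        have hTu : T (Y₁ ∪ Y₂) = T Y₁ * T Y₂ := hc Y₁ Y₂ h₁ h₂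
        have hbar : chronoBar T ((X₁ \ Y₁) ∪ (X₂ \ Y₂))
            = chronoBar T (X₂ \ Y₂) * chronoBar T (X₁ \ Y₁) := by
          apply IH
          · have hsub : Y₁ ∪ Y₂ ⊆ X₁ ∪ X₂ := Finset.union_subset_union h₁ h₂
            have hpos : 0 < (Y₁ ∪ Y₂).card :=
              Finset.card_pos.mpr (Finset.nonempty_iff_ne_empty.mpr hne)
            have := Finset.card_sdiff_of_subset hsub
            rw [← hsdiff, this]
            have := Finset.card_le_card hsub
            omega
          · exact hd.mono Finset.sdiff_subset Finset.sdiff_subset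
          · intro S₁ S₂ hs₁ hs₂
            exact hc S₁ S₂ (hs₁.trans Finset.sdiff_subset) (hs₂.trans Finset.sdiff_subset)
        rw [hcardu, hTu, hsdiff, hbar, hG, rearrange]
      rw [sum_powerset_union_ne X₁ X₂ hd _ G hFG]
      have hmem : ((∅, ∅) : Finset ι × Finset ι) ∈ X₁.powerset ×ˢ X₂.powerset := by
        simp
      have hsplit := Finset.add_sum_erase (X₁.powerset ×ˢ X₂.powerset) G hmem
      have hfull : ∑ p ∈ X₁.powerset ×ˢ X₂.powerset, G p = 0 := by
        rw [Finset.sum_product]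
        have hzero : ∀ Y₁ ∈ X₁.powerset, ∑ Y₂ ∈ X₂.powerset, G (Y₁, Y₂) = 0 := by
          intro Y₁ _
          have : ∀ Y₂ ∈ X₂.powerset, G (Y₁, Y₂)
              = (-1:A)^Y₁.card * (T Y₁ *
                  (((-1:A)^Y₂.card * (T Y₂ * chronoBar T (X₂ \ Y₂))) * chronoBar T (X₁ \ Y₁))) := by
            intro Y₂ _; rfl
          rw [Finset.sum_congr rfl this, ← Finset.mul_sum, ← Finset.mul_sum, ← Finset.sum_mul,
            inner_conv T hT1 h2, zero_mul, mul_zero, mul_zero]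
        rw [Finset.sum_congr rfl hzero]
        simp
      rw [hfull] at hsplit
      have : ∑ p ∈ (X₁.powerset ×ˢ X₂.powerset).erase (∅, ∅), G p = -G (∅, ∅) := by
        rw [eq_neg_of_add_eq_zero_right hsplit]
      rw [this, neg_neg, hG]
      simp [hT1, chronoBar_empty]

section FintypeClaims
variable {κ : Type*} [Fintype κ] [DecidableEq κ]

lemma compl_union_split (X₁ X₂ Y₁ Y₂ : Finset κ) (hu : X₁ ∪ X₂ = Finset.univ)
    (hd : Disjoint X₁ X₂) (h₁ : Y₁ ⊆ X₁) (h₂ : Y₂ ⊆ X₂) :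
    (Y₁ ∪ Y₂)ᶜ = (X₁ \ Y₁) ∪ (X₂ \ Y₂) := by
  ext a
  have ha : a ∈ X₁ ∪ X₂ := by rw [hu]; exact Finset.mem_univ a
  rw [Finset.mem_union] at ha
  simp only [Finset.mem_compl, Finset.mem_union, Finset.mem_sdiff]
  have m1 : a ∈ Y₁ → a ∈ X₁ := fun h => h₁ h
  have m2 : a ∈ Y₂ → a ∈ X₂ := fun h => h₂ h
  have m3 : a ∈ X₁ → a ∉ X₂ := fun h => Finset.disjoint_left.mp hd h
  tauto

lemma claimA (T : Finset κ → A) (hT1 : T ∅ = 1) (lst : κ) (X₁ X₂ : Finset κ)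
    (hd : Disjoint X₁ X₂) (hu : X₁ ∪ X₂ = Finset.univ) (hl : lst ∈ X₁) (h2 : X₂ ≠ ∅)
    (hc : ∀ S₁ S₂ : Finset κ, Disjoint S₁ S₂ → S₁ ∪ S₂ ≠ Finset.univ →
      S₁ ⊆ X₁ → S₂ ⊆ X₂ → T (S₁ ∪ S₂) = T S₁ * T S₂) :
    advP T lst = -(T X₁ * T X₂) := by
  have hlst2 : lst ∉ X₂ := Finset.disjoint_left.mp hd hl
  have hE : Finset.univ.erase lst = (X₁.erase lst) ∪ X₂ := by
    ext a
    have ha : a ∈ X₁ ∪ X₂ := by rw [hu]; exact Finset.mem_univ a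
    rw [Finset.mem_union] at ha
    simp only [Finset.mem_erase, Finset.mem_union, Finset.mem_univ, and_true]
    constructor
    · intro h; rcases ha with h1 | h1
      · exact Or.inl ⟨h, h1⟩
      · exact Or.inr h1
    · rintro (⟨h, _⟩ | h1)
      · exact h
      · intro he; subst he; exact hlst2 h1
  have hd' : Disjoint (X₁.erase lst) X₂ := hd.mono (Finset.erase_subset _ _) le_rfl
  set G : Finset κ × Finset κ → A := fun p =>
    (-1:A)^p.1.card * (T (X₁ \ p.1) *
      ((-1:A)^p.2.card * (T (X₂ \ p.2) * chronoBar T p.2) * chronoBar T p.1)) with hG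
  have hFG : ∀ Y₁ Y₂ : Finset κ, Y₁ ⊆ X₁.erase lst → Y₂ ⊆ X₂ → Y₁ ∪ Y₂ ≠ ∅ →
      (-1:A)^(Y₁ ∪ Y₂).card * (T (Y₁ ∪ Y₂)ᶜ * chronoBar T (Y₁ ∪ Y₂)) = G (Y₁, Y₂) := by
    intro Y₁ Y₂ h₁ h₂ hne
    have h₁' : Y₁ ⊆ X₁ := h₁.trans (Finset.erase_subset _ _)
    have hdy : Disjoint Y₁ Y₂ := hd.mono h₁' h₂
    have hcardu : (Y₁ ∪ Y₂).card = Y₁.card + Y₂.card := Finset.card_union_of_disjoint hdy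
    have hcompl : (Y₁ ∪ Y₂)ᶜ = (X₁ \ Y₁) ∪ (X₂ \ Y₂) :=
      compl_union_split X₁ X₂ Y₁ Y₂ hu hd h₁' h₂
    have hnuniv : (X₁ \ Y₁) ∪ (X₂ \ Y₂) ≠ Finset.univ := by
      rw [← hcompl]
      intro h
      obtain ⟨a, ha⟩ := Finset.nonempty_iff_ne_empty.mpr hne
      have : a ∈ (Y₁ ∪ Y₂)ᶜ := by rw [h]; exact Finset.mem_univ a
      exact Finset.mem_compl.mp this ha
    have hTu : T ((Y₁ ∪ Y₂)ᶜ) = T (X₁ \ Y₁) * T (X₂ \ Y₂) := by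
      rw [hcompl]
      exact hc _ _ (hd.mono Finset.sdiff_subset Finset.sdiff_subset) hnuniv
        Finset.sdiff_subset Finset.sdiff_subset
    have hbar : chronoBar T (Y₁ ∪ Y₂) = chronoBar T Y₂ * chronoBar T Y₁ := by
      apply chronoBar_causal T hT1 (Y₁ ∪ Y₂).card _ _ le_rfl hdy
      intro S₁ S₂ hs₁ hs₂
      have hlnot : lst ∉ S₁ ∪ S₂ := by
        rw [Finset.mem_union]
        rintro (h | h)
        · exact (Finset.notMem_erase lst X₁) (h₁ (hs₁ h))
        · exact hlst2 (h₂ (hs₂ h))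
      refine hc S₁ S₂ (hdy.mono hs₁ hs₂) ?_ ((hs₁.trans h₁).trans (Finset.erase_subset _ _))
        (hs₂.trans h₂)
      intro h
      rw [h] at hlnot
      exact hlnot (Finset.mem_univ lst)
    rw [hcardu, hTu, hbar, hG, rearrange]
  rw [advP, hE, sum_powerset_union_ne _ _ hd' _ G hFG]
  have hmem : ((∅, ∅) : Finset κ × Finset κ) ∈ (X₁.erase lst).powerset ×ˢ X₂.powerset := by
    simp
  have hsplit := Finset.add_sum_erase ((X₁.erase lst).powerset ×ˢ X₂.powerset) G hmem
  have hfull : ∑ p ∈ (X₁.erase lst).powerset ×ˢ X₂.powerset, G p = 0 := by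
    rw [Finset.sum_product]
    have hzero : ∀ Y₁ ∈ (X₁.erase lst).powerset, ∑ Y₂ ∈ X₂.powerset, G (Y₁, Y₂) = 0 := by
      intro Y₁ _
      have hid : ∀ Y₂ ∈ X₂.powerset, G (Y₁, Y₂)
          = (-1:A)^Y₁.card * (T (X₁ \ Y₁) *
              (((-1:A)^Y₂.card * (T (X₂ \ Y₂) * chronoBar T Y₂)) * chronoBar T Y₁)) := by
        intro Y₂ _; rfl
      rw [Finset.sum_congr rfl hid, ← Finset.mul_sum, ← Finset.mul_sum, ← Finset.sum_mul,
        inner_left T hT1 h2, zero_mul, mul_zero, mul_zero]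
    rw [Finset.sum_congr rfl hzero]
    simp
  rw [hfull] at hsplit
  rw [eq_neg_of_add_eq_zero_right hsplit, hG]
  simp [hT1, chronoBar_empty]

lemma claimR (T : Finset κ → A) (hT1 : T ∅ = 1) (lst : κ) (X₁ X₂ : Finset κ)
    (hd : Disjoint X₁ X₂) (hu : X₁ ∪ X₂ = Finset.univ) (hl : lst ∈ X₂) (h1 : X₁ ≠ ∅)
    (hc : ∀ S₁ S₂ : Finset κ, Disjoint S₁ S₂ → S₁ ∪ S₂ ≠ Finset.univ →
      S₁ ⊆ X₁ → S₂ ⊆ X₂ → T (S₁ ∪ S₂) = T S₁ * T S₂) :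
    retP T lst = -(T X₁ * T X₂) := by
  have hlst1 : lst ∉ X₁ := Finset.disjoint_right.mp hd hl
  have hE : Finset.univ.erase lst = X₁ ∪ (X₂.erase lst) := by
    ext a
    have ha : a ∈ X₁ ∪ X₂ := by rw [hu]; exact Finset.mem_univ a
    rw [Finset.mem_union] at ha
    simp only [Finset.mem_erase, Finset.mem_union, Finset.mem_univ, and_true]
    constructor
    · intro h; rcases ha with h1' | h1'
      · exact Or.inl h1'
      · exact Or.inr ⟨h, h1'⟩
    · rintro (h1' | ⟨h, _⟩)
      · intro he; subst he; exact hlst1 h1'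
      · exact h
  have hd' : Disjoint X₁ (X₂.erase lst) := hd.mono le_rfl (Finset.erase_subset _ _)
  set G : Finset κ × Finset κ → A := fun p =>
    (-1:A)^p.2.card * (chronoBar T p.2 *
      ((-1:A)^p.1.card * (chronoBar T p.1 * T (X₁ \ p.1)) * T (X₂ \ p.2))) with hG
  have hFG : ∀ Y₁ Y₂ : Finset κ, Y₁ ⊆ X₁ → Y₂ ⊆ X₂.erase lst → Y₁ ∪ Y₂ ≠ ∅ →
      (-1:A)^(Y₁ ∪ Y₂).card * (chronoBar T (Y₁ ∪ Y₂) * T (Y₁ ∪ Y₂)ᶜ) = G (Y₁, Y₂) := by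
    intro Y₁ Y₂ h₁ h₂ hne
    have h₂' : Y₂ ⊆ X₂ := h₂.trans (Finset.erase_subset _ _)
    have hdy : Disjoint Y₁ Y₂ := hd.mono h₁ h₂'
    have hcardu : (Y₁ ∪ Y₂).card = Y₁.card + Y₂.card := Finset.card_union_of_disjoint hdy
    have hcompl : (Y₁ ∪ Y₂)ᶜ = (X₁ \ Y₁) ∪ (X₂ \ Y₂) :=
      compl_union_split X₁ X₂ Y₁ Y₂ hu hd h₁ h₂'
    have hnuniv : (X₁ \ Y₁) ∪ (X₂ \ Y₂) ≠ Finset.univ := by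
      rw [← hcompl]
      intro h
      obtain ⟨a, ha⟩ := Finset.nonempty_iff_ne_empty.mpr hne
      have : a ∈ (Y₁ ∪ Y₂)ᶜ := by rw [h]; exact Finset.mem_univ a
      exact Finset.mem_compl.mp this ha
    have hTu : T ((Y₁ ∪ Y₂)ᶜ) = T (X₁ \ Y₁) * T (X₂ \ Y₂) := by
      rw [hcompl]
      exact hc _ _ (hd.mono Finset.sdiff_subset Finset.sdiff_subset) hnuniv
        Finset.sdiff_subset Finset.sdiff_subset
    have hbar : chronoBar T (Y₁ ∪ Y₂) = chronoBar T Y₂ * chronoBar T Y₁ := by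
      apply chronoBar_causal T hT1 (Y₁ ∪ Y₂).card _ _ le_rfl hdy
      intro S₁ S₂ hs₁ hs₂
      have hlnot : lst ∉ S₁ ∪ S₂ := by
        rw [Finset.mem_union]
        rintro (h | h)
        · exact hlst1 (h₁ (hs₁ h))
        · exact (Finset.notMem_erase lst X₂) (h₂ (hs₂ h))
      refine hc S₁ S₂ (hdy.mono hs₁ hs₂) ?_ (hs₁.trans h₁)
        ((hs₂.trans h₂).trans (Finset.erase_subset _ _))
      intro h
      rw [h] at hlnot
      exact hlnot (Finset.mem_univ lst)
    rw [hcardu, hTu, hbar, hG, add_comm Y₁.card, rearrange]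
  rw [retP, hE, sum_powerset_union_ne _ _ hd' _ G hFG]
  have hmem : ((∅, ∅) : Finset κ × Finset κ) ∈ X₁.powerset ×ˢ (X₂.erase lst).powerset := by
    simp
  have hsplit := Finset.add_sum_erase (X₁.powerset ×ˢ (X₂.erase lst).powerset) G hmem
  have hfull : ∑ p ∈ X₁.powerset ×ˢ (X₂.erase lst).powerset, G p = 0 := by
    rw [Finset.sum_product]
    rw [Finset.sum_comm]
    have hzero : ∀ Y₂ ∈ (X₂.erase lst).powerset, ∑ Y₁ ∈ X₁.powerset, G (Y₁, Y₂) = 0 := by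
      intro Y₂ _
      have hid : ∀ Y₁ ∈ X₁.powerset, G (Y₁, Y₂)
          = (-1:A)^Y₂.card * (chronoBar T Y₂ *
              (((-1:A)^Y₁.card * (chronoBar T Y₁ * T (X₁ \ Y₁))) * T (X₂ \ Y₂))) := by
        intro Y₁ _; rfl
      rw [Finset.sum_congr rfl hid, ← Finset.mul_sum, ← Finset.mul_sum, ← Finset.sum_mul,
        inner_right T hT1 h1, zero_mul, mul_zero, mul_zero]
    rw [Finset.sum_congr rfl hzero]
    simp
  rw [hfull] at hsplit
  rw [eq_neg_of_add_eq_zero_right hsplit, hG]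
  simp [hT1, chronoBar_empty]

end FintypeClaims

end EG

/-- Epstein–Glaser construction of the `n`-th chronological product: if `A_n − R_n = A′_n − R′_n`
with `A_n` supported in `Γ̄⁺(x_n)` and `R_n` supported in `Γ̄⁻(x_n)`, then `T_n := A_n − A′_n`
satisfies the causality factorization `T_n = T(X₁)·T(X₂)` for every partition
`X₁ ⊔ X₂ = {1,…,n}` into nonempty parts with `x(X₁) ≥ x(X₂)`. -/
theorem chrono_n_causality {A : Type*} [Ring A] (n : ℕ) (hn : 0 < n)
    (x : Fin n → Fin 4 → ℝ)
    (T : Finset (Fin n) → A) (hT1 : T ∅ = 1)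
    (hcaus : ∀ S₁ S₂ : Finset (Fin n), Disjoint S₁ S₂ → S₁ ∪ S₂ ≠ Finset.univ →
      (∀ i ∈ S₁, ∀ j ∈ S₂, x i - x j ∉ closure Vminus) → T (S₁ ∪ S₂) = T S₁ * T S₂)
    (An Rn : A)
    (hARD : An - Rn = advP T ⟨n - 1, by omega⟩ - retP T ⟨n - 1, by omega⟩)
    (hAsupp : ¬ (∀ i : Fin n, (i : ℕ) < n - 1 →
      x i - x ⟨n - 1, by omega⟩ ∈ closure Vplus) → An = 0)
    (hRsupp : ¬ (∀ i : Fin n, (i : ℕ) < n - 1 →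
      x i - x ⟨n - 1, by omega⟩ ∈ closure Vminus) → Rn = 0)
    (X₁ X₂ : Finset (Fin n)) (hd : Disjoint X₁ X₂) (hu : X₁ ∪ X₂ = Finset.univ)
    (h1 : X₁ ≠ ∅) (h2 : X₂ ≠ ∅)
    (hx : ∀ i ∈ X₁, ∀ j ∈ X₂, x i - x j ∉ closure Vminus) :
    An - advP T ⟨n - 1, by omega⟩ = T X₁ * T X₂ := by
  have hc : ∀ S₁ S₂ : Finset (Fin n), Disjoint S₁ S₂ → S₁ ∪ S₂ ≠ Finset.univ →
      S₁ ⊆ X₁ → S₂ ⊆ X₂ → T (S₁ ∪ S₂) = T S₁ * T S₂ := by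
    intro S₁ S₂ hds hnu hs1 hs2
    exact hcaus S₁ S₂ hds hnu (fun i hi j hj => hx i (hs1 hi) j (hs2 hj))
  set lst : Fin n := ⟨n - 1, by omega⟩ with hlst
  have hlv : (lst : ℕ) = n - 1 := rfl
  have hmem : lst ∈ X₁ ∪ X₂ := by rw [hu]; exact Finset.mem_univ lst
  have hne_lt : ∀ i : Fin n, i ≠ lst → (i : ℕ) < n - 1 := by
    intro i hi
    have h1' : (i : ℕ) < n := i.2
    have h2' : (i : ℕ) ≠ n - 1 := fun h => hi (Fin.ext (by rw [h, hlv]))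
    omega
  rcases Finset.mem_union.mp hmem with hl | hl
  · -- lst ∈ X₁ : use A
    obtain ⟨j, hj⟩ := Finset.nonempty_iff_ne_empty.mpr h2
    have hjlst : j ≠ lst := by
      intro h; subst h; exact (Finset.disjoint_left.mp hd hl) hj
    have hsp : x lst - x j ∉ closure Vminus := hx lst hl j hj
    have hnp : x j - x lst ∉ closure Vplus := by
      intro h
      have := EG.neg_mem_closure_Vminus h
      rw [neg_sub] at this
      exact hsp this
    have hAn : An = 0 := hAsupp (fun hall => hnp (hall j (hne_lt j hjlst)))
    have hAdv := EG.claimA T hT1 lst X₁ X₂ hd hu hl h2 hc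
    rw [hAn, hAdv]
    simp
  · -- lst ∈ X₂ : use R
    obtain ⟨i, hi⟩ := Finset.nonempty_iff_ne_empty.mpr h1
    have hilst : i ≠ lst := by
      intro h; subst h; exact (Finset.disjoint_right.mp hd hl) hi
    have hsp : x i - x lst ∉ closure Vminus := hx i hi lst hl
    have hRn : Rn = 0 := hRsupp (fun hall => hsp (hall i (hne_lt i hilst)))
    have hkey : An - advP T lst = Rn - retP T lst := by
      calc An - advP T lst = (An - Rn) - advP T lst + Rn := by abel
        _ = (advP T lst - retP T lst) - advP T lst + Rn := by rw [hARD]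
        _ = Rn - retP T lst := by abel
    have hRet := EG.claimR T hT1 lst X₁ X₂ hd hu hl h1 hc
    rw [hkey, hRn, hRet]
    simp
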